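/- Let E and F be nonempty closed convex sets in ℝⁿ such that E + F = ℝⁿ and for every u ∈ ℝⁿ the metric projections p_E(u) and p_F(u) are orthogonal, i.e., p_E(u) · p_F(u) = 0. If at least one of the sets E and F is a linear subspace of ℝⁿ, then E and F are complementary orthogonal linear subspaces of ℝⁿ: E = F^⊥ and F = E^⊥. -/

import Mathlib

open RealInnerProductSpace Pointwise

/-- The (negative) polar set of `X`. -/
def polarSet {n : ℕ} (X : Set (EuclideanSpace ℝ (Fin n))) : Set (EuclideanSpace ℝ (Fin n)) :=
  {x | ∀ e ∈ X, ⟪x, e⟫ ≤ 0}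

/-- The orthogonal complement of a set `X`. -/
def orthComp {n : ℕ} (X : Set (EuclideanSpace ℝ (Fin n))) : Set (EuclideanSpace ℝ (Fin n)) :=
  {x | ∀ u ∈ X, ⟪x, u⟫ = 0}

/-- `y` is the metric projection of `u` on `E`: it belongs to `E` and is nearest to `u`. -/
def IsMetricProj {n : ℕ} (E : Set (EuclideanSpace ℝ (Fin n)))
    (u y : EuclideanSpace ℝ (Fin n)) : Prop :=
  y ∈ E ∧ ∀ x ∈ E, ‖u - y‖ ≤ ‖u - x‖

/-- The orthogonal projection is a metric projection. -/
lemma isMetricProj_orthogonalProjection {n : ℕ} (S : Submodule ℝ (EuclideanSpace ℝ (Fin n)))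
    (u : EuclideanSpace ℝ (Fin n)) :
    IsMetricProj (S : Set (EuclideanSpace ℝ (Fin n))) u (S.orthogonalProjectionOnto u : EuclideanSpace ℝ (Fin n)) := by
  refine ⟨(S.orthogonalProjectionOnto u).2, fun x hx => ?_⟩
  set y : EuclideanSpace ℝ (Fin n) := (S.orthogonalProjectionOnto u : EuclideanSpace ℝ (Fin n))
  have hperp : ⟪u - y, y - x⟫ = 0 :=
    Submodule.starProjection_inner_eq_zero (K := S) u (y - x) (Submodule.sub_mem S (S.orthogonalProjectionOnto u).2 hx)
  have hdec : u - x = (u - y) + (y - x) := by abel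
  have hsq : ‖u - x‖ ^ 2 = ‖u - y‖ ^ 2 + ‖y - x‖ ^ 2 := by
    rw [hdec, norm_add_sq_real, hperp]; ring
  have h1 : ‖u - y‖ ^ 2 ≤ ‖u - x‖ ^ 2 := by nlinarith [sq_nonneg ‖y - x‖]
  nlinarith [norm_nonneg (u - y), norm_nonneg (u - x)]

/-- Key lemma: if `E` is a subspace `S` with the given hypotheses, then `F = Sᗮ`. -/
lemma F_eq_orthogonal {n : ℕ} (S : Submodule ℝ (EuclideanSpace ℝ (Fin n)))
    (F : Set (EuclideanSpace ℝ (Fin n)))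
    (hsum : (S : Set (EuclideanSpace ℝ (Fin n))) + F = Set.univ)
    (horth : ∀ u y z : EuclideanSpace ℝ (Fin n),
      IsMetricProj (S : Set (EuclideanSpace ℝ (Fin n))) u y → IsMetricProj F u z → ⟪y, z⟫ = 0) :
    F = (Sᗮ : Set (EuclideanSpace ℝ (Fin n))) := by
  have hFsub : F ⊆ (Sᗮ : Set (EuclideanSpace ℝ (Fin n))) := by
    intro z hz
    have hz' : IsMetricProj F z z := ⟨hz, fun x hx => by simp⟩
    have hy := isMetricProj_orthogonalProjection S z
    have h0 : ⟪(S.orthogonalProjectionOnto z : EuclideanSpace ℝ (Fin n)), z⟫ = 0 :=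
      horth z _ z hy hz'
    set y : EuclideanSpace ℝ (Fin n) := (S.orthogonalProjectionOnto z : EuclideanSpace ℝ (Fin n))
    have hperp : ⟪z - y, y⟫ = 0 :=
      Submodule.starProjection_inner_eq_zero (K := S) z y (S.orthogonalProjectionOnto z).2
    have hyy : ⟪y, y⟫ = 0 := by
      have : ⟪y, z - y⟫ = 0 := by rw [real_inner_comm]; exact hperp
      have h2 : ⟪y, z⟫ - ⟪y, y⟫ = 0 := by rwa [inner_sub_right] at this
      linarith [h0, h2]
    have hy0 : y = 0 := by
      have := inner_self_eq_zero (𝕜 := ℝ) (x := y)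
      exact this.1 hyy
    -- z ∈ Sᗮ : for all w ∈ S, ⟪w, z⟫ = 0
    intro w hw
    have hz2 : z - y ∈ Sᗮ := Submodule.sub_starProjection_mem_orthogonal (K := S) z
    rw [hy0, sub_zero] at hz2
    exact hz2 w hw
  apply Set.Subset.antisymm hFsub
  intro v hv
  have : v ∈ (S : Set (EuclideanSpace ℝ (Fin n))) + F := by rw [hsum]; trivial
  obtain ⟨e, he, f, hf, hef⟩ := this
  have hef' : e + f = v := hef
  have hfS : f ∈ Sᗮ := hFsub hf
  have heS' : e ∈ Sᗮ := by
    have h3 : e = v - f := eq_sub_of_add_eq hef'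
    rw [h3]
    exact Sᗮ.sub_mem hv hfS
  have he0 : e = 0 := by
    have := heS' e he
    exact inner_self_eq_zero.1 this
  have hvf : v = f := by rw [← hef', he0, zero_add]
  rw [hvf]
  exact hf

lemma orthComp_coe {n : ℕ} (S : Submodule ℝ (EuclideanSpace ℝ (Fin n))) :
    orthComp (S : Set (EuclideanSpace ℝ (Fin n))) = (Sᗮ : Set (EuclideanSpace ℝ (Fin n))) := by
  ext x
  simp only [orthComp, Set.mem_setOf_eq, SetLike.mem_coe, Submodule.mem_orthogonal]
  constructor
  · intro h u hu; rw [real_inner_comm]; exact h u hu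
  · intro h u hu; rw [real_inner_comm]; exact h u hu

theorem complementary_subspaces_of_subspace
(n : ℕ) (E F : Set (EuclideanSpace ℝ (Fin n)))
    (hEne : E.Nonempty) (hEcl : IsClosed E) (hEconv : Convex ℝ E)
    (hFne : F.Nonempty) (hFcl : IsClosed F) (hFconv : Convex ℝ F)
    (hsum : E + F = Set.univ)
    (horth : ∀ u y z : EuclideanSpace ℝ (Fin n),
      IsMetricProj E u y → IsMetricProj F u z → ⟪y, z⟫ = 0)
    (hsub : (∃ S : Submodule ℝ (EuclideanSpace ℝ (Fin n)), E = (S : Set _)) ∨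
      (∃ S : Submodule ℝ (EuclideanSpace ℝ (Fin n)), F = (S : Set _))) :
    E = orthComp F ∧ F = orthComp E := by
  rcases hsub with ⟨S, hE⟩ | ⟨S, hF⟩
  · subst hE
    have hF : F = (Sᗮ : Set (EuclideanSpace ℝ (Fin n))) :=
      F_eq_orthogonal S F hsum horth
    subst hF
    constructor
    · rw [orthComp_coe, Submodule.orthogonal_orthogonal]
    · rw [orthComp_coe]
  · subst hF
    have hsum' : (S : Set (EuclideanSpace ℝ (Fin n))) + E = Set.univ := by
      rw [add_comm]; exact hsum
    have horth' : ∀ u y z : EuclideanSpace ℝ (Fin n),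
        IsMetricProj (S : Set (EuclideanSpace ℝ (Fin n))) u y → IsMetricProj E u z →
        ⟪y, z⟫ = 0 := by
      intro u y z hy hz
      rw [real_inner_comm]
      exact horth u z y hz hy
    have hE : E = (Sᗮ : Set (EuclideanSpace ℝ (Fin n))) :=
      F_eq_orthogonal S E hsum' horth'
    subst hE
    constructor
    · rw [orthComp_coe]
    · rw [orthComp_coe, Submodule.orthogonal_orthogonal]
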